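/- If T is a 2-distinguishable tree of order n ≥ 3, then its fixing number satisfies F(T) ≤ 4n/11. -/

import Mathlib

open SimpleGraph

/-- A set `S` of vertices is a fixing set of `G` if the only automorphism of `G`
fixing every vertex of `S` is the identity. -/
def IsFixingSet {V : Type*} (G : SimpleGraph V) (S : Set V) : Prop :=
  ∀ φ : G ≃g G, (∀ v ∈ S, φ v = v) → ∀ v, φ v = v

/-- The fixing number of a finite graph: the minimum cardinality of a fixing set. -/
noncomputable def fixingNumber {V : Type*} [Fintype V] (G : SimpleGraph V) : ℕ :=
  sInf {n | ∃ S : Finset V, S.card = n ∧ IsFixingSet G ↑S}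

/-- A coloring is distinguishing if the only color-preserving automorphism is the identity. -/
def IsDistinguishingColoring {V α : Type*} (G : SimpleGraph V) (c : V → α) : Prop :=
  ∀ φ : G ≃g G, (∀ v, c (φ v) = c v) → ∀ v, φ v = v

/-- `G` is `D`-distinguishable if it has a distinguishing coloring with at most `D` colors. -/
def Distinguishable {V : Type*} (G : SimpleGraph V) (D : ℕ) : Prop :=
  ∃ c : V → Fin D, IsDistinguishingColoring G c

/-- The distinguishing number of `G`. -/
noncomputable def distinguishingNumber {V : Type*} (G : SimpleGraph V) : ℕ :=
  sInf {D | Distinguishable G D}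

/-- Eccentricity of a vertex: the supremum of distances to other vertices. -/
noncomputable def ecc {V : Type*} (G : SimpleGraph V) (v : V) : ℕ :=
  sSup (Set.range (G.dist v))


open Finset
open scoped Classical
set_option linter.unusedSectionVars false
set_option maxHeartbeats 1000000

namespace TreeFix
variable {V : Type*} [DecidableEq V] [Fintype V] {G : SimpleGraph V}

lemma iso_dist_le (φ : G ≃g G) (u v : V) (h : G.Reachable u v) :
    G.dist (φ u) (φ v) ≤ G.dist u v := by
  obtain ⟨p, hp⟩ := h.exists_walk_length_eq_dist
  calc G.dist (φ u) (φ v) ≤ (p.map φ.toHom).length := SimpleGraph.dist_le _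
    _ = G.dist u v := by rw [SimpleGraph.Walk.length_map, hp]

lemma iso_dist (hc : G.Connected) (φ : G ≃g G) (u v : V) :
    G.dist (φ u) (φ v) = G.dist u v := by
  refine le_antisymm (iso_dist_le φ u v (hc u v)) ?_
  have := iso_dist_le φ.symm (φ u) (φ v) (hc _ _)
  simpa using this

/-- trees have no triangles -/
lemma no_triangle (hT : G.IsTree) {a b c : V} (hab : G.Adj a b) (hbc : G.Adj b c)
    (hac : G.Adj a c) : False := by
  have h1 : (Walk.cons hac Walk.nil).IsPath := by
    simp [Walk.cons_isPath_iff, hac.ne]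
  have h2 : (Walk.cons hab (Walk.cons hbc Walk.nil)).IsPath := by
    simp [Walk.cons_isPath_iff, hab.ne, hbc.ne, hac.ne]
  have := (hT.existsUnique_path a c).unique h2 h1
  have := congrArg Walk.length this
  simp at this

/-- In a tree, a walk whose length equals the distance exists & is THE path; any path
realizes the distance. -/
lemma path_length_eq_dist (hT : G.IsTree) {u v : V} (p : G.Walk u v) (hp : p.IsPath) :
    p.length = G.dist u v := by
  obtain ⟨q, hq, hql⟩ := hT.isConnected.exists_path_of_dist u v
  rw [(hT.existsUnique_path u v).unique hp hq]; exact hql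

/-- no ties from an adjacent pair -/
lemma dist_ne_of_adj (hT : G.IsTree) {u v : V} (huv : G.Adj u v) (x : V) :
    G.dist x u ≠ G.dist x v := by
  intro h
  obtain ⟨p, hp, hpl⟩ := hT.isConnected.exists_path_of_dist x u
  by_cases hv : v ∈ p.support
  · -- then dist x v ≤ len(takeUntil) and dist v u = 1, triangle forces contradiction
    have h1 : G.dist x v ≤ (p.takeUntil v hv).length := SimpleGraph.dist_le _
    have h2 : G.dist v u ≤ (p.dropUntil v hv).length := SimpleGraph.dist_le _
    have h3 : (p.takeUntil v hv).length + (p.dropUntil v hv).length = p.length := by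
      rw [← Walk.length_append, Walk.take_spec]
    have h4 : 0 < G.dist v u := hT.isConnected.pos_dist_of_ne huv.ne'
    have h5 : G.dist x u ≤ G.dist x v + G.dist v u := hT.isConnected.dist_triangle
    have h6 : G.dist v u = 1 := by rw [SimpleGraph.dist_eq_one_iff_adj]; exact huv.symm
    -- dist x v ≤ p.length - 1
    have h7 : (p.dropUntil v hv).length ≥ 1 := by
      rcases Nat.eq_zero_or_pos (p.dropUntil v hv).length with h | h
      · exfalso
        have := (p.dropUntil v hv).eq_of_length_eq_zero h
        exact huv.ne (this ▸ rfl)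
      · exact h
    omega
  · -- concat is a path from x to v of length dist x u + 1
    have hpath : (p.concat huv).IsPath := by
      rw [Walk.isPath_def, Walk.support_concat, List.nodup_append']
      refine ⟨hp.support_nodup, List.nodup_singleton v, ?_⟩
      intro a ha hb
      simp at hb; subst hb; exact hv ha
    have := path_length_eq_dist hT _ hpath
    rw [Walk.length_concat, hpl] at this
    omega

lemma adj_dichotomy (hT : G.IsTree) {u v : V} (huv : G.Adj u v) (x : V) :
    G.dist x v = G.dist x u + 1 ∨ G.dist x u = G.dist x v + 1 := by
  have h1 : G.dist x v ≤ G.dist x u + G.dist u v := hT.isConnected.dist_triangle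
  have h2 : G.dist x u ≤ G.dist x v + G.dist v u := hT.isConnected.dist_triangle
  have h3 : G.dist u v = 1 := by rwa [SimpleGraph.dist_eq_one_iff_adj]
  have h4 : G.dist v u = 1 := by rwa [SimpleGraph.dist_eq_one_iff_adj, adj_comm]
  have h5 := dist_ne_of_adj hT huv x
  omega

/-- aux -/
lemma unique_pred (hT : G.IsTree) {x z y1 y2 : V} (h1 : G.Adj y1 z) (h2 : G.Adj y2 z)
    (d1 : G.dist x y1 + 1 = G.dist x z) (d2 : G.dist x y2 + 1 = G.dist x z) : y1 = y2 := by
  have key : ∀ (y : V) (hy : G.Adj y z), G.dist x y + 1 = G.dist x z →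
      ∃ (q : G.Walk x z), q.IsPath ∧ q.getVert (G.dist x z - 1) = y := by
    intro y hy hd
    obtain ⟨p, hp, hpl⟩ := hT.isConnected.exists_path_of_dist x y
    have hz : z ∉ p.support := by
      intro hz
      have : G.dist x z ≤ (p.takeUntil z hz).length := SimpleGraph.dist_le _
      have := SimpleGraph.Walk.length_takeUntil_le p hz
      omega
    have hpath : (p.concat hy).IsPath := by
      rw [Walk.isPath_def, Walk.support_concat, List.nodup_append']
      refine ⟨hp.support_nodup, List.nodup_singleton z, ?_⟩
      intro a ha hb
      simp at hb; subst hb; exact hz ha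
    refine ⟨p.concat hy, hpath, ?_⟩
    rw [Walk.concat_eq_append, Walk.getVert_append]
    have : ¬ (G.dist x z - 1 < p.length) := by omega
    rw [if_neg this]
    have : G.dist x z - 1 - p.length = 0 := by omega
    rw [this, Walk.getVert_zero]
  obtain ⟨q1, hq1, he1⟩ := key y1 h1 d1
  obtain ⟨q2, hq2, he2⟩ := key y2 h2 d2
  rw [(hT.existsUnique_path x z).unique hq1 hq2] at he1
  rw [he1] at he2; exact he2

/-- distances along a path in a tree -/
lemma getVert_dist (hT : G.IsTree) {a b : V} (W : G.Walk a b) (hW : W.IsPath)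
    {i j : ℕ} (hij : i ≤ j) (hj : j ≤ W.length) :
    G.dist (W.getVert i) (W.getVert j) = j - i := by
  have step : ∀ (k l : ℕ), l ≤ W.length → k ≤ l → G.dist (W.getVert k) (W.getVert l) ≤ l - k := by
    intro k l hl hkl
    obtain ⟨m, rfl⟩ := Nat.exists_eq_add_of_le hkl
    induction m with
    | zero => simp
    | succ m ih =>
      show G.dist (W.getVert k) (W.getVert (k+m+1)) ≤ k+m+1 - k
      have h1 : G.dist (W.getVert k) (W.getVert (k+m)) ≤ m := by
        have := ih (by omega) (by omega); omega
      have h2 : G.Adj (W.getVert (k+m)) (W.getVert (k+m+1)) :=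
        W.adj_getVert_succ (by omega)
      have h3 : G.dist (W.getVert (k+m)) (W.getVert (k+m+1)) = 1 := by
        rw [SimpleGraph.dist_eq_one_iff_adj]; exact h2
      have := hT.isConnected.dist_triangle (u := W.getVert k) (v := W.getVert (k+m))
        (w := W.getVert (k+m+1))
      omega
  have hlen : W.length = G.dist a b := path_length_eq_dist hT W hW
  have h1 : G.dist (W.getVert 0) (W.getVert i) ≤ i - 0 := step 0 i (by omega) (by omega)
  have h2 : G.dist (W.getVert i) (W.getVert j) ≤ j - i := step i j hj hij
  have h3 : G.dist (W.getVert j) (W.getVert W.length) ≤ W.length - j := step j W.length le_rfl hj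
  rw [Walk.getVert_zero] at h1
  rw [Walk.getVert_length] at h3
  have t1 : G.dist a b ≤ G.dist a (W.getVert i) + G.dist (W.getVert i) b :=
    hT.isConnected.dist_triangle
  have t2 : G.dist (W.getVert i) b ≤ G.dist (W.getVert i) (W.getVert j) + G.dist (W.getVert j) b :=
    hT.isConnected.dist_triangle
  omega

lemma getVert_dist_left (hT : G.IsTree) {a b : V} (W : G.Walk a b) (hW : W.IsPath)
    {i : ℕ} (hi : i ≤ W.length) : G.dist a (W.getVert i) = i := by
  have := getVert_dist hT W hW (Nat.zero_le i) hi
  rwa [Walk.getVert_zero, Nat.sub_zero] at this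

/-- sum of distances to v -/
noncomputable def fsum (G : SimpleGraph V) (v : V) : ℕ := ∑ x, G.dist x v

lemma iso_fsum (hc : G.Connected) (φ : G ≃g G) (v : V) : fsum G (φ v) = fsum G v := by
  unfold fsum
  rw [← Equiv.sum_comp φ.toEquiv (fun x => G.dist x (φ v))]
  exact Finset.sum_congr rfl fun x _ => iso_dist hc φ x v

/-- vertices strictly closer to v than to u -/
noncomputable def toward (G : SimpleGraph V) (u v : V) : Finset V :=
  univ.filter (fun x => G.dist x v < G.dist x u)

lemma fsum_identity (hT : G.IsTree) {u v : V} (huv : G.Adj u v) :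
    fsum G u + (toward G v u).card = fsum G v + (toward G u v).card := by
  unfold fsum toward
  rw [Finset.card_filter, Finset.card_filter, ← Finset.sum_add_distrib,
    ← Finset.sum_add_distrib]
  refine Finset.sum_congr rfl fun x _ => ?_
  rcases adj_dichotomy hT huv x with h | h <;> split_ifs <;> omega

lemma toward_compl (hT : G.IsTree) {u v : V} (huv : G.Adj u v) :
    (toward G u v).card + (toward G v u).card = Fintype.card V := by
  unfold toward
  have h1 := Finset.card_filter_add_card_filter_not (s := (univ : Finset V))
    (p := fun x => G.dist x v < G.dist x u)
  have h2 : Finset.filter (fun x => ¬ (G.dist x v < G.dist x u)) univ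
      = Finset.filter (fun x => G.dist x u < G.dist x v) univ := by
    refine Finset.filter_congr fun x _ => ?_
    have := dist_ne_of_adj hT huv x
    constructor <;> intro h <;> omega
  rw [h2] at h1
  rw [← Finset.card_univ, ← h1]

/-- two distinct minimizers of fsum are adjacent -/
lemma min_adj (hT : G.IsTree) {a b : V} (ha : ∀ u, fsum G a ≤ fsum G u)
    (hb : ∀ u, fsum G b ≤ fsum G u) (hab : a ≠ b) : G.Adj a b := by
  obtain ⟨W, hW, hWl⟩ := hT.isConnected.exists_path_of_dist a b
  set d := G.dist a b with hd
  have hd1 : 1 ≤ d := hT.isConnected.pos_dist_of_ne hab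
  by_cases hd2 : d = 1
  · rw [← SimpleGraph.dist_eq_one_iff_adj]; omega
  exfalso
  have hdd : 2 ≤ d := by omega
  -- the chain of "forward" sets
  set B : ℕ → Finset V := fun i => toward G (W.getVert i) (W.getVert (i+1)) with hB
  have hadj : ∀ i, i + 1 ≤ d → G.Adj (W.getVert i) (W.getVert (i+1)) := by
    intro i hi; exact W.adj_getVert_succ (by omega)
  have hdistinct : ∀ i j, i ≤ j → j ≤ d → W.getVert i ≠ W.getVert j → True := fun _ _ _ _ _ => trivial
  have hsub : ∀ i, i + 2 ≤ d → (B (i+1)).card < (B i).card := by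
    intro i hi
    have hsubset : B (i+1) ⊆ B i := by
      intro x hx
      simp only [hB, toward, Finset.mem_filter, Finset.mem_univ, true_and] at hx ⊢
      rcases adj_dichotomy hT (hadj i (by omega)) x with h | h
      · -- bad case : dist x g(i+1) = dist x gi + 1; show contradiction
        exfalso
        rcases adj_dichotomy hT (hadj (i+1) (by omega)) x with h2 | h2
        · omega
        · -- dist x g(i+1) = dist x g(i+2) + 1 and = dist x gi + 1
          have he : W.getVert i = W.getVert (i+1+1) := by
            refine unique_pred (x := x) hT (hadj i (by omega))
              ((hadj (i+1) (by omega)).symm) (by omega) (by omega)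
          have d1 : G.dist a (W.getVert i) = i := getVert_dist_left hT W hW (by omega)
          have d2 : G.dist a (W.getVert (i+1+1)) = i+1+1 := getVert_dist_left hT W hW (by omega)
          rw [he] at d1; omega
      · omega
    have hmem : W.getVert (i+1) ∈ B i := by
      simp only [hB, toward, Finset.mem_filter, Finset.mem_univ, true_and]
      have h0 : G.dist (W.getVert (i+1)) (W.getVert (i+1)) = 0 := by simp
      have h1 : G.dist (W.getVert i) (W.getVert (i+1)) = 1 := by
        have := getVert_dist hT W hW (i := i) (j := i+1) (by omega) (by omega); omega
      rw [SimpleGraph.dist_comm] at h1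
      omega
    have hnmem : W.getVert (i+1) ∉ B (i+1) := by
      simp only [hB, toward, Finset.mem_filter, Finset.mem_univ, true_and]
      have h0 : G.dist (W.getVert (i+1)) (W.getVert (i+1)) = 0 := by simp
      omega
    exact Finset.card_lt_card ⟨hsubset, fun hs => hnmem (hs hmem)⟩
  have chain : ∀ k, k + 1 ≤ d → (B k).card + k ≤ (B 0).card := by
    intro k
    induction k with
    | zero => simp
    | succ k ih => intro hk; have := hsub k (by omega); have := ih (by omega); omega
  -- endpoint inequalities
  have e1 : 2 * (B 0).card ≤ Fintype.card V := by
    have hadj0 := hadj 0 (by omega)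
    have hident := fsum_identity hT hadj0
    have hcompl := toward_compl hT hadj0
    have hmin := ha (W.getVert 1)
    have hg0 : W.getVert 0 = a := W.getVert_zero
    rw [hg0] at hident hcompl
    have hBB : B 0 = toward G a (W.getVert 1) := by
      simp only [hB]; rw [hg0]
    norm_num at hident hcompl
    rw [hBB]
    omega
  have e2 : Fintype.card V ≤ 2 * (B (d-1)).card := by
    have hadj1 := hadj (d-1) (by omega)
    have hident := fsum_identity hT hadj1
    have hcompl := toward_compl hT hadj1
    have hgd : W.getVert (d-1+1) = b := by
      have : d - 1 + 1 = W.length := by omega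
      rw [this, W.getVert_length]
    have hmin := hb (W.getVert (d-1))
    rw [hgd] at hident hcompl
    simp only [hB]
    rw [hgd]
    omega
  have := chain (d-1) (by omega)
  omega

/-- Existence of a "center": one vertex or an adjacent pair preserved by all automorphisms -/
lemma exists_center (hT : G.IsTree) :
    ∃ r r' : V, (r = r' ∨ G.Adj r r') ∧
      ∀ φ : G ≃g G, (φ r = r ∧ φ r' = r') ∨ (φ r = r' ∧ φ r' = r) := by
  have hne : Nonempty V := hT.isConnected.nonempty
  obtain ⟨r, -, hr⟩ := Finset.exists_min_image univ (fsum G) ⟨Classical.arbitrary V, mem_univ _⟩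
  have hrmin : ∀ u, fsum G r ≤ fsum G u := fun u => hr u (mem_univ u)
  by_cases h : ∃ z, z ≠ r ∧ ∀ u, fsum G z ≤ fsum G u
  · obtain ⟨r', hr'ne, hr'min⟩ := h
    have hadj : G.Adj r r' := min_adj hT hrmin hr'min (Ne.symm hr'ne)
    refine ⟨r, r', Or.inr hadj, fun φ => ?_⟩
    have hM : ∀ z, (∀ u, fsum G z ≤ fsum G u) → z = r ∨ z = r' := by
      intro z hz
      by_contra hcon
      push_neg at hcon
      obtain ⟨hz1, hz2⟩ := hcon
      exact no_triangle hT hadj (min_adj hT hr'min hz (Ne.symm hz2))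
        (min_adj hT hrmin hz (Ne.symm hz1))
    have hphimin : ∀ z, (∀ u, fsum G z ≤ fsum G u) → (∀ u, fsum G (φ z) ≤ fsum G u) := by
      intro z hz u
      rw [iso_fsum hT.isConnected φ z]; exact hz u
    have h1 := hM _ (hphimin r hrmin)
    have h2 := hM _ (hphimin r' hr'min)
    rcases h1 with h1 | h1 <;> rcases h2 with h2 | h2
    · exfalso; exact hr'ne (φ.injective (h2.trans h1.symm))
    · left; exact ⟨h1, h2⟩
    · right; exact ⟨h1, h2⟩
    · exfalso; exact hr'ne (φ.injective (h1.trans h2.symm)).symm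
  · push_neg at h
    refine ⟨r, r, Or.inl rfl, fun φ => ?_⟩
    have hmin : ∀ u, fsum G (φ r) ≤ fsum G u := by
      intro u; rw [iso_fsum hT.isConnected φ r]; exact hrmin u
    by_contra hcon
    have hne2 : φ r ≠ r := by
      intro hrr; exact hcon (Or.inl ⟨hrr, hrr⟩)
    obtain ⟨u, hu⟩ := h (φ r) hne2
    exact absurd (hmin u) (by omega)
  
section rooted
variable (G)

/-- the subtree of `b` when the tree is rooted at `r` -/
noncomputable def subt (r b : V) : Finset V :=
  univ.filter (fun x => G.dist r x = G.dist r b + G.dist b x)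

/-- size of the subtree -/
noncomputable def tsize (r b : V) : ℕ := (subt G r b).card

/-- `b` is a child of `p` in the tree rooted at `r` -/
def child (r p b : V) : Prop := G.Adj p b ∧ G.dist r b = G.dist r p + 1

/-- the unique grandchild under a size-2 child -/
noncomputable def childOf (r b : V) : V :=
  if h : ∃ cc, child G r b cc ∧ ∀ y, G.Adj cc y → y = b then h.choose else b

end rooted

lemma mem_subt (r b x : V) : x ∈ subt G r b ↔ G.dist r x = G.dist r b + G.dist b x := by
  simp [subt]

lemma mem_subt_self (r b : V) : b ∈ subt G r b := by simp [subt]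

lemma tsize_pos (r b : V) : 1 ≤ tsize G r b :=
  Finset.card_pos.2 ⟨b, mem_subt_self r b⟩

lemma subt_of_ne (hT : G.IsTree) {r b x : V} (hx : x ∈ subt G r b) (hne : x ≠ b) :
    G.dist r b < G.dist r x := by
  rw [mem_subt] at hx
  have : 0 < G.dist b x := hT.isConnected.pos_dist_of_ne (Ne.symm hne)
  omega

lemma iso_mem_subt (hT : G.IsTree) (φ : G ≃g G) (hr : φ r = r) {b x : V}
    (hx : x ∈ subt G r b) : φ x ∈ subt G r (φ b) := by
  rw [mem_subt] at hx ⊢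
  rw [← hr, iso_dist hT.isConnected, iso_dist hT.isConnected, iso_dist hT.isConnected]
  exact hx

lemma iso_subt (hT : G.IsTree) (φ : G ≃g G) (hr : φ r = r) (b : V) :
    (subt G r b).image φ = subt G r (φ b) := by
  apply Finset.Subset.antisymm
  · intro y hy
    obtain ⟨x, hx, rfl⟩ := Finset.mem_image.1 hy
    exact iso_mem_subt hT φ hr hx
  · intro y hy
    rw [Finset.mem_image]
    refine ⟨φ.symm y, ?_, φ.apply_symm_apply y⟩
    have hr' : φ.symm r = r := by
      conv_lhs => rw [← hr]
      exact φ.symm_apply_apply r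
    have := iso_mem_subt hT φ.symm hr' (b := φ b) hy
    rwa [φ.symm_apply_apply] at this

lemma iso_tsize (hT : G.IsTree) (φ : G ≃g G) (hr : φ r = r) (b : V) :
    tsize G r (φ b) = tsize G r b := by
  unfold tsize
  rw [← iso_subt hT φ hr b, Finset.card_image_of_injective _ φ.injective]

lemma subt_trans (hT : G.IsTree) {r b x : V} (hx : x ∈ subt G r b) :
    subt G r x ⊆ subt G r b := by
  intro y hy
  rw [mem_subt] at hx hy ⊢
  have t1 : G.dist b y ≤ G.dist b x + G.dist x y := hT.isConnected.dist_triangle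
  have t2 : G.dist r y ≤ G.dist r b + G.dist b y := hT.isConnected.dist_triangle
  omega

lemma child_mem_subt {r p b : V} (h : child G r p b) : b ∈ subt G r p := by
  rw [mem_subt]
  have : G.dist p b = 1 := by rw [SimpleGraph.dist_eq_one_iff_adj]; exact h.1
  have h2 := h.2
  omega

lemma child_subt_subset (hT : G.IsTree) {r p b : V} (h : child G r p b) :
    subt G r b ⊆ subt G r p := subt_trans hT (child_mem_subt h)

lemma exists_parent (hT : G.IsTree) {r v : V} {k : ℕ} (hv : G.dist r v = k + 1) :
    ∃ p, child G r p v ∧ G.dist r p = k := by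
  obtain ⟨W, hW, hWl⟩ := hT.isConnected.exists_path_of_dist r v
  refine ⟨W.getVert k, ⟨?_, ?_⟩, ?_⟩
  · have := W.adj_getVert_succ (i := k) (by omega)
    have hv' : W.getVert (k+1) = v := by
      have : k + 1 = W.length := by omega
      rw [this, W.getVert_length]
    rwa [hv'] at this
  · rw [getVert_dist_left hT W hW (by omega)]; omega
  · rw [getVert_dist_left hT W hW (by omega)]

lemma parent_unique (hT : G.IsTree) {r p p' b : V} (h : child G r p b) (h' : child G r p' b) :
    p = p' := by
  refine unique_pred (x := r) hT h.1 h'.1 ?_ ?_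
  · have := h.2; omega
  · have := h.2; have := h'.2
    have h2 := h'.2; omega

/-- the vertex at depth (dist r b) on the unique path to any subtree member is b -/
lemma subt_getVert (hT : G.IsTree) {r b x : V} (hx : x ∈ subt G r b)
    (W : G.Walk r x) (hW : W.IsPath) : W.getVert (G.dist r b) = b := by
  rw [mem_subt] at hx
  obtain ⟨P1, hP1, hP1l⟩ := hT.isConnected.exists_path_of_dist r b
  obtain ⟨P2, hP2, hP2l⟩ := hT.isConnected.exists_path_of_dist b x
  have happ : (P1.append P2).length = G.dist r x := by
    rw [Walk.length_append]; omega
  have happ_path : (P1.append P2).IsPath :=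
    SimpleGraph.Walk.isPath_of_length_eq_dist _ happ
  have := (hT.existsUnique_path r x).unique hW happ_path
  rw [this, Walk.getVert_append]
  rw [if_neg (by omega : ¬ G.dist r b < P1.length)]
  have : G.dist r b - P1.length = 0 := by omega
  rw [this, Walk.getVert_zero]

/-- comparability: two subtrees containing a common point are nested -/
lemma subt_comparable (hT : G.IsTree) {r b b' x : V} (hx : x ∈ subt G r b)
    (hx' : x ∈ subt G r b') (hle : G.dist r b ≤ G.dist r b') : b' ∈ subt G r b := by
  obtain ⟨W, hW, hWl⟩ := hT.isConnected.exists_path_of_dist r x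
  have h1 : W.getVert (G.dist r b) = b := subt_getVert hT hx W hW
  have h2 : W.getVert (G.dist r b') = b' := subt_getVert hT hx' W hW
  have hb' : G.dist r b' ≤ W.length := by
    rw [mem_subt] at hx'; omega
  rw [mem_subt]
  have h3 := getVert_dist hT W hW hle hb'
  rw [h1, h2] at h3
  rw [mem_subt] at hx'
  omega

lemma sibling_subt_disjoint (hT : G.IsTree) {r p b b' x : V} (h : child G r p b)
    (h' : child G r p b') (hne : b ≠ b') (hx : x ∈ subt G r b) (hx' : x ∈ subt G r b') :
    False := by
  have hdep : G.dist r b = G.dist r b' := by rw [h.2, h'.2]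
  rcases le_total (G.dist r b) (G.dist r b') with hle | hle
  · have := subt_comparable hT hx hx' hle
    rw [mem_subt] at this
    have : G.dist b b' = 0 := by omega
    have : b = b' := by
      have hreach := hT.isConnected b b'
      rw [← hreach.dist_eq_zero_iff]; exact this
    exact hne this
  · have := subt_comparable hT hx' hx hle
    rw [mem_subt] at this
    have : G.dist b' b = 0 := by omega
    have : b' = b := by
      have hreach := hT.isConnected b' b
      rw [← hreach.dist_eq_zero_iff]; exact this
    exact hne this.symm

lemma child_iso (hT : G.IsTree) (φ : G ≃g G) (hr : φ r = r) {p b : V}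
    (hp : φ p = p) (h : child G r p b) : child G r p (φ b) := by
  constructor
  · rw [← hp]; exact φ.map_adj_iff.2 h.1
  · rw [← hr, ← hp, iso_dist hT.isConnected, iso_dist hT.isConnected]
    exact h.2

/-- ancestors in subtrees: the parent of a non-root element of a subtree is in the subtree -/
lemma parent_mem_subt (hT : G.IsTree) {r b b' p' : V} (hb' : b' ∈ subt G r b)
    (hne : b' ≠ b) (hp' : child G r p' b') : p' ∈ subt G r b := by
  obtain ⟨W, hW, hWl⟩ := hT.isConnected.exists_path_of_dist r b'
  have hdep : G.dist r b < G.dist r b' := subt_of_ne hT hb' hne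
  have h1 : W.getVert (G.dist r b) = b :=
    subt_getVert hT hb' W hW
  -- the penultimate vertex of W is the parent of b'
  have h2 : W.getVert (G.dist r b' - 1) = p' := by
    have hadj : G.Adj (W.getVert (G.dist r b' - 1)) b' := by
      have := W.adj_getVert_succ (i := G.dist r b' - 1) (by omega)
      have he : W.getVert (G.dist r b' - 1 + 1) = b' := by
        have : G.dist r b' - 1 + 1 = W.length := by omega
        rw [this, W.getVert_length]
      rwa [he] at this
    refine unique_pred (x := r) hT hadj hp'.1 ?_ ?_
    · rw [getVert_dist_left hT W hW (by omega)]; omega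
    · have := hp'.2; omega
  have h3 := getVert_dist hT W hW (i := G.dist r b) (j := G.dist r b' - 1)
    (by omega) (by omega)
  rw [h1, h2] at h3
  rw [mem_subt, h3]
  have := hp'.2
  omega

/-- structure of subtrees of size 1: leaves -/
lemma tsize_one_nbhd (hT : G.IsTree) {r p b : V} (h : child G r p b)
    (hs : tsize G r b = 1) : ∀ y, G.Adj b y → y = p := by
  intro y hy
  have hsub : subt G r b = {b} := by
    obtain ⟨a, ha⟩ := Finset.card_eq_one.1 hs
    have hb := mem_subt_self (G := G) r b
    rw [ha, Finset.mem_singleton] at hb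
    rw [ha, hb]
  rcases adj_dichotomy hT hy r with hcase | hcase
  · -- y is deeper: y ∈ subt b = {b}, contradiction with adj
    exfalso
    have hymem : y ∈ subt G r b := by
      rw [mem_subt]
      have : G.dist b y = 1 := by rw [SimpleGraph.dist_eq_one_iff_adj]; exact hy
      omega
    rw [hsub, Finset.mem_singleton] at hymem
    exact hy.ne hymem.symm
  · -- y is the parent
    refine unique_pred (x := r) hT hy.symm h.1 (by omega) (by have := h.2; omega)

/-- structure of subtrees of size 2 -/
lemma tsize_two_nbhd (hT : G.IsTree) {r p b : V} (h : child G r p b)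
    (hs : tsize G r b = 2) :
    ∃ c, child G r b c ∧ (∀ y, G.Adj b y → (y = p ∨ y = c)) ∧ (∀ y, G.Adj c y → y = b) := by
  obtain ⟨u, w, huw, hsub⟩ := Finset.card_eq_two.1 hs
  -- b is one of them
  have hbmem := mem_subt_self (G := G) r b
  rw [hsub] at hbmem
  -- let c be the other one
  have : ∃ c, c ≠ b ∧ subt G r b = {b, c} := by
    rcases Finset.mem_insert.1 hbmem with rfl | hb
    · exact ⟨w, fun hc => huw hc.symm, by rw [hsub]⟩
    · rw [Finset.mem_singleton.1 hb] at hsub ⊢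
      exact ⟨u, fun hc => huw hc, by rw [hsub, Finset.pair_comm]⟩
  obtain ⟨c, hcb, hsub2⟩ := this
  have hcmem : c ∈ subt G r b := by rw [hsub2]; simp
  have hcd : G.dist r b < G.dist r c := subt_of_ne hT hcmem hcb
  have hcdist : G.dist r c = G.dist r b + G.dist b c := (mem_subt _ _ _).1 hcmem
  -- c is at depth (dist r b) + 1 : consider the path r → c
  obtain ⟨W, hW, hWl⟩ := hT.isConnected.exists_path_of_dist r c
  have h1 : W.getVert (G.dist r b) = b := subt_getVert hT hcmem W hW
  have hy : W.getVert (G.dist r b + 1) ∈ subt G r b := by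
    rw [mem_subt]
    have e1 := getVert_dist_left hT W hW (i := G.dist r b + 1) (by omega)
    have e2 := getVert_dist hT W hW (i := G.dist r b) (j := G.dist r b + 1) (by omega) (by omega)
    rw [h1] at e2
    omega
  rw [hsub2] at hy
  have hyb : W.getVert (G.dist r b + 1) ≠ b := by
    intro hc
    have := getVert_dist_left hT W hW (i := G.dist r b + 1) (by omega)
    rw [hc] at this
    omega
  have hyc : W.getVert (G.dist r b + 1) = c := by
    rcases Finset.mem_insert.1 hy with hcase | hcase
    · exact absurd hcase hyb
    · exact Finset.mem_singleton.1 hcase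
  have hbc : G.Adj b c := by
    have := W.adj_getVert_succ (i := G.dist r b) (by omega)
    rwa [h1, hyc] at this
  have hcdep : G.dist r c = G.dist r b + 1 := by
    have := getVert_dist_left hT W hW (i := G.dist r b + 1) (by omega)
    rwa [hyc] at this
  have hchild : child G r b c := ⟨hbc, hcdep⟩
  refine ⟨c, hchild, ?_, ?_⟩
  · intro y hby
    rcases adj_dichotomy hT hby r with hcase | hcase
    · -- deeper neighbor of b lies in subt b
      right
      have hymem : y ∈ subt G r b := by
        rw [mem_subt]
        have : G.dist b y = 1 := by rw [SimpleGraph.dist_eq_one_iff_adj]; exact hby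
        omega
      rw [hsub2] at hymem
      rcases Finset.mem_insert.1 hymem with rfl | hcase2
      · exact absurd rfl hby.ne'
      · exact Finset.mem_singleton.1 hcase2
    · left
      exact unique_pred (x := r) hT hby.symm h.1 (by omega) (by have := h.2; omega)
  · intro y hcy
    rcases adj_dichotomy hT hcy r with hcase | hcase
    · -- deeper neighbor of c would make subt b too big
      exfalso
      have hymem : y ∈ subt G r b := by
        rw [mem_subt]
        have h5 : G.dist c y = 1 := by rw [SimpleGraph.dist_eq_one_iff_adj]; exact hcy
        have t1 : G.dist b y ≤ G.dist b c + G.dist c y := hT.isConnected.dist_triangle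
        have t2 : G.dist r y ≤ G.dist r b + G.dist b y := hT.isConnected.dist_triangle
        omega
      rw [hsub2] at hymem
      rcases Finset.mem_insert.1 hymem with rfl | hcase2
      · omega
      · rw [Finset.mem_singleton.1 hcase2] at hcase; omega
    · exact unique_pred (x := r) hT hcy.symm hbc (by omega) (by omega)

/-- swap two leaves with common neighbor p -/
lemma swap_leaves (hpx : G.Adj p x) (hpy : G.Adj p y) (hxy : x ≠ y)
    (hx : ∀ z, G.Adj x z → z = p) (hy : ∀ z, G.Adj y z → z = p) :
    ∃ φ : G ≃g G, φ x = y ∧ φ y = x ∧ ∀ v, v ≠ x → v ≠ y → φ v = v := by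
  have hpx' : p ≠ x := hpx.ne
  have hpy' : p ≠ y := hpy.ne
  have key : ∀ u v, G.Adj u v → G.Adj (Equiv.swap x y u) (Equiv.swap x y v) := by
    intro u v huv
    by_cases hu1 : u = x
    · subst hu1
      have hv := hx v huv
      subst hv
      rw [Equiv.swap_apply_left, Equiv.swap_apply_of_ne_of_ne hpx' hpy']
      exact hpy.symm
    by_cases hu2 : u = y
    · subst hu2
      have hv := hy v huv
      subst hv
      rw [Equiv.swap_apply_right, Equiv.swap_apply_of_ne_of_ne hpx' hpy']
      exact hpx.symm
    by_cases hv1 : v = x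
    · subst hv1
      have hu := hx u huv.symm
      subst hu
      rw [Equiv.swap_apply_left, Equiv.swap_apply_of_ne_of_ne hpx' hpy']
      exact hpy
    by_cases hv2 : v = y
    · subst hv2
      have hu := hy u huv.symm
      subst hu
      rw [Equiv.swap_apply_right, Equiv.swap_apply_of_ne_of_ne hpx' hpy']
      exact hpx
    · rwa [Equiv.swap_apply_of_ne_of_ne hu1 hu2, Equiv.swap_apply_of_ne_of_ne hv1 hv2]
  refine ⟨⟨Equiv.swap x y, ?_⟩, Equiv.swap_apply_left x y, Equiv.swap_apply_right x y,
    fun v h1 h2 => Equiv.swap_apply_of_ne_of_ne h1 h2⟩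
  intro u v
  constructor
  · intro h
    have := key _ _ h
    rwa [Equiv.swap_apply_self, Equiv.swap_apply_self] at this
  · exact key u v

/-- swap two hanging paths of length 2 -/
lemma swap_paths {p b1 c1 b2 c2 : V} (hb : b1 ≠ b2)
    (hpb1 : G.Adj p b1) (hpb2 : G.Adj p b2)
    (hb1c : G.Adj b1 c1) (hb2c : G.Adj b2 c2)
    (hb1n : ∀ y, G.Adj b1 y → y = p ∨ y = c1) (hb2n : ∀ y, G.Adj b2 y → y = p ∨ y = c2)
    (hc1n : ∀ y, G.Adj c1 y → y = b1) (hc2n : ∀ y, G.Adj c2 y → y = b2) :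
    ∃ φ : G ≃g G, φ b1 = b2 ∧ φ b2 = b1 ∧ φ c1 = c2 ∧ φ c2 = c1 ∧
      ∀ v, v ≠ b1 → v ≠ b2 → v ≠ c1 → v ≠ c2 → φ v = v := by
  have hpb1' : p ≠ b1 := hpb1.ne
  have hpb2' : p ≠ b2 := hpb2.ne
  have hpc1 : p ≠ c1 := by
    rintro rfl; have := hc1n b2 hpb2; exact hb this.symm
  have hpc2 : p ≠ c2 := by
    rintro rfl; have := hc2n b1 hpb1; exact hb this
  have hbc1 : b1 ≠ c1 := hb1c.ne
  have hbc2 : b2 ≠ c2 := hb2c.ne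
  have hc12 : c1 ≠ c2 := by
    rintro rfl; have := hc1n b2 hb2c.symm; exact hb this.symm
  have hb1c2 : b1 ≠ c2 := by
    rintro rfl; have := hc2n p hpb1.symm; exact hpb2' this
  have hb2c1 : b2 ≠ c1 := by
    rintro rfl; have := hc1n p hpb2.symm; exact hpb1' this
  set e : Equiv.Perm V := (Equiv.swap b1 b2).trans (Equiv.swap c1 c2) with he
  have heb1 : e b1 = b2 := by
    simp only [he, Equiv.trans_apply, Equiv.swap_apply_left]
    exact Equiv.swap_apply_of_ne_of_ne hb2c1 hbc2
  have heb2 : e b2 = b1 := by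
    simp only [he, Equiv.trans_apply, Equiv.swap_apply_right]
    exact Equiv.swap_apply_of_ne_of_ne (by exact fun h => hbc1 h) hb1c2
  have hec1 : e c1 = c2 := by
    simp only [he, Equiv.trans_apply]
    rw [Equiv.swap_apply_of_ne_of_ne hbc1.symm hb2c1.symm, Equiv.swap_apply_left]
  have hec2 : e c2 = c1 := by
    simp only [he, Equiv.trans_apply]
    rw [Equiv.swap_apply_of_ne_of_ne hb1c2.symm hbc2.symm, Equiv.swap_apply_right]
  have hee : ∀ v, v ≠ b1 → v ≠ b2 → v ≠ c1 → v ≠ c2 → e v = v := by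
    intro v h1 h2 h3 h4
    simp only [he, Equiv.trans_apply]
    rw [Equiv.swap_apply_of_ne_of_ne h1 h2, Equiv.swap_apply_of_ne_of_ne h3 h4]
  have hep : e p = p := hee p hpb1' hpb2' hpc1 hpc2
  have key : ∀ u v, G.Adj u v → G.Adj (e u) (e v) := by
    intro u v huv
    by_cases hu1 : u = b1
    · subst hu1
      rcases hb1n v huv with rfl | rfl
      · rw [heb1, hep]; exact hpb2.symm
      · rw [heb1, hec1]; exact hb2c
    by_cases hu2 : u = b2
    · subst hu2
      rcases hb2n v huv with rfl | rfl
      · rw [heb2, hep]; exact hpb1.symm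
      · rw [heb2, hec2]; exact hb1c
    by_cases hu3 : u = c1
    · subst hu3
      have := hc1n v huv; subst this
      rw [hec1, heb1]; exact hb2c.symm
    by_cases hu4 : u = c2
    · subst hu4
      have := hc2n v huv; subst this
      rw [hec2, heb2]; exact hb1c.symm
    -- u is none of the four
    rw [hee u hu1 hu2 hu3 hu4]
    by_cases hv1 : v = b1
    · subst hv1
      rcases hb1n u huv.symm with rfl | rfl
      · rw [heb1]; exact hpb2
      · exact absurd rfl hu3
    by_cases hv2 : v = b2
    · subst hv2
      rcases hb2n u huv.symm with rfl | rfl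
      · rw [heb2]; exact hpb1
      · exact absurd rfl hu4
    by_cases hv3 : v = c1
    · subst hv3
      have := hc1n u huv.symm; exact absurd this hu1
    by_cases hv4 : v = c2
    · subst hv4
      have := hc2n u huv.symm; exact absurd this hu2
    · rwa [hee v hv1 hv2 hv3 hv4]
  have hinv : ∀ v, e (e v) = v := by
    intro v
    by_cases hv1 : v = b1
    · subst hv1; rw [heb1, heb2]
    by_cases hv2 : v = b2
    · subst hv2; rw [heb2, heb1]
    by_cases hv3 : v = c1
    · subst hv3; rw [hec1, hec2]
    by_cases hv4 : v = c2
    · subst hv4; rw [hec2, hec1]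
    · rw [hee v hv1 hv2 hv3 hv4, hee v hv1 hv2 hv3 hv4]
  refine ⟨⟨e, ?_⟩, heb1, heb2, hec1, hec2, hee⟩
  intro u v
  constructor
  · intro h
    have := key _ _ h
    rwa [hinv, hinv] at this
  · exact key u v

section pigeon

/-- number of leaf-children of any vertex is at most 2 -/
lemma leaf_children_le (hT : G.IsTree) {col : V → Fin 2}
    (hcol : IsDistinguishingColoring G col) (r p : V) :
    (univ.filter (fun b => child G r p b ∧ tsize G r b = 1)).card ≤ 2 := by
  by_contra hcon
  push_neg at hcon
  obtain ⟨a, b, c, ha, hb, hc, hab, hac, hbc⟩ := Finset.two_lt_card_iff.1 hcon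
  simp only [Finset.mem_filter, Finset.mem_univ, true_and] at ha hb hc
  -- two of the three have equal colors
  have hpigeon : (col a = col b) ∨ (col a = col c) ∨ (col b = col c) := by
    have h1 := (col a).isLt
    have h2 := (col b).isLt
    have h3 := (col c).isLt
    rw [Fin.ext_iff, Fin.ext_iff, Fin.ext_iff]
    omega
  have key : ∀ x y : V, x ≠ y →
      (child G r p x ∧ tsize G r x = 1) → (child G r p y ∧ tsize G r y = 1) →
      col x = col y → False := by
    intro x y hxy hx hy hcxy
    obtain ⟨φ, hφx, hφy, hφo⟩ := swap_leaves hx.1.1 hy.1.1 hxy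
      (tsize_one_nbhd hT hx.1 hx.2) (tsize_one_nbhd hT hy.1 hy.2)
    have hpres : ∀ v, col (φ v) = col v := by
      intro v
      by_cases h1 : v = x
      · subst h1; rw [hφx]; exact hcxy.symm
      by_cases h2 : v = y
      · subst h2; rw [hφy]; exact hcxy
      · rw [hφo v h1 h2]
    have := hcol φ hpres x
    rw [hφx] at this
    exact hxy this.symm
  rcases hpigeon with h | h | h
  · exact key a b hab ha hb h
  · exact key a c hac ha hc h
  · exact key b c hbc hb hc h

lemma childOf_spec (hT : G.IsTree) {r p b : V} (h : child G r p b) (hs : tsize G r b = 2) :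
    child G r b (childOf G r b) ∧ (∀ y, G.Adj b y → y = p ∨ y = childOf G r b) ∧
    (∀ y, G.Adj (childOf G r b) y → y = b) := by
  obtain ⟨cs, hcs, hbn, hcn⟩ := tsize_two_nbhd hT h hs
  have hex : ∃ cc, child G r b cc ∧ ∀ y, G.Adj cc y → y = b := ⟨cs, hcs, hcn⟩
  have heq : childOf G r b = cs := by
    unfold childOf
    rw [dif_pos hex]
    have hspec := hex.choose_spec
    rcases hbn _ hspec.1.1 with hcase | hcase
    · exfalso
      have h1 := hspec.1.2
      have h2 := h.2
      rw [hcase] at h1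
      omega
    · exact hcase
  rw [heq]
  exact ⟨hcs, hbn, hcn⟩

/-- number of size-2-children of any vertex is at most 4 -/
lemma path2_children_le (hT : G.IsTree) {col : V → Fin 2}
    (hcol : IsDistinguishingColoring G col) (r p : V) :
    (univ.filter (fun b => child G r p b ∧ tsize G r b = 2)).card ≤ 4 := by
  by_contra hcon
  push_neg at hcon
  set K := univ.filter (fun b => child G r p b ∧ tsize G r b = 2) with hK
  have hcard : (univ : Finset (Fin 2 × Fin 2)).card < K.card := by
    simpa using hcon
  obtain ⟨b1, hb1, b2, hb2, hbne, hfeq⟩ :=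
    Finset.exists_ne_map_eq_of_card_lt_of_maps_to hcard
      (f := fun b => ((col b, col (childOf G r b)) : Fin 2 × Fin 2))
      (fun a _ => Finset.mem_univ _)
  simp only [hK, Finset.mem_filter, Finset.mem_univ, true_and] at hb1 hb2
  obtain ⟨hc1, hbn1, hcn1⟩ := childOf_spec hT hb1.1 hb1.2
  obtain ⟨hc2, hbn2, hcn2⟩ := childOf_spec hT hb2.1 hb2.2
  rw [Prod.ext_iff] at hfeq
  obtain ⟨hcolb, hcolc⟩ := hfeq
  obtain ⟨φ, he1, he2, he3, he4, he5⟩ := swap_paths hbne hb1.1.1 hb2.1.1 hc1.1 hc2.1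
    hbn1 hbn2 hcn1 hcn2
  have hpres : ∀ v, col (φ v) = col v := by
    intro v
    by_cases h1 : v = b1
    · subst h1; rw [he1]; exact hcolb.symm
    by_cases h2 : v = b2
    · subst h2; rw [he2]; exact hcolb
    by_cases h3 : v = childOf G r b1
    · subst h3; rw [he3]; exact hcolc.symm
    by_cases h4 : v = childOf G r b2
    · subst h4; rw [he4]; exact hcolc
    · rw [he5 v h1 h2 h3 h4]
  have := hcol φ hpres b1
  rw [he1] at this
  exact hbne this.symm

end pigeon

section freedef
variable (G)

/-- a branch is *slim* (free of S-vertices) if all children of each of its vertices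
have pairwise distinct subtree sizes -/
def free (r b : V) : Prop := ∀ q ∈ subt G r b, ∀ c1 c2, child G r q c1 → child G r q c2 →
  c1 ≠ c2 → tsize G r c1 ≠ tsize G r c2

/-- the non-minimal free children of p having a free same-size sibling -/
noncomputable def Sp [LinearOrder V] (r p : V) : Finset V :=
  univ.filter (fun b => child G r p b ∧ free G r b ∧
    ∃ b', child G r p b' ∧ free G r b' ∧ tsize G r b' = tsize G r b ∧ b' < b)

/-- the fixing set -/
noncomputable def fixset [LinearOrder V] (r : V) : Finset V :=
  univ.biUnion (fun p => Sp G r p)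

end freedef

lemma mem_Sp [LinearOrder V] {r p b : V} : b ∈ Sp G r p ↔ child G r p b ∧ free G r b ∧
    ∃ b', child G r p b' ∧ free G r b' ∧ tsize G r b' = tsize G r b ∧ b' < b := by
  simp [Sp]

lemma Sp_subset_fixset [LinearOrder V] {r p b : V} (h : b ∈ Sp G r p) : b ∈ fixset G r :=
  Finset.mem_biUnion.2 ⟨p, Finset.mem_univ p, h⟩

/-- a non-free branch contains a vertex of the fixing set -/
lemma exists_S_vertex [LinearOrder V] (hT : G.IsTree) {r b : V} (h : ¬ free G r b) :
    ∃ x, x ∈ fixset G r ∧ x ∈ subt G r b := by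
  unfold free at h
  push_neg at h
  set Q := univ.filter (fun q => q ∈ subt G r b ∧ ∃ c1 c2, child G r q c1 ∧ child G r q c2 ∧
    c1 ≠ c2 ∧ tsize G r c1 = tsize G r c2) with hQ
  have hQne : Q.Nonempty := by
    obtain ⟨q, hq, c1, c2, h1, h2, h3, h4⟩ := h
    exact ⟨q, by simp only [hQ, Finset.mem_filter, Finset.mem_univ, true_and]
               ; exact ⟨hq, c1, c2, h1, h2, h3, h4⟩⟩
  obtain ⟨q, hqQ, hqmax⟩ := Finset.exists_max_image Q (fun q => G.dist r q) hQne
  simp only [hQ, Finset.mem_filter, Finset.mem_univ, true_and] at hqQ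
  obtain ⟨hqsub, c1, c2, h1, h2, h3, h4⟩ := hqQ
  -- both c1 and c2 are free by maximality
  have hfree : ∀ c, child G r q c → free G r c := by
    intro c hc
    by_contra hcon
    unfold free at hcon
    push_neg at hcon
    obtain ⟨q', hq', d1, d2, g1, g2, g3, g4⟩ := hcon
    have hq'subq : q' ∈ subt G r q := subt_trans hT (child_mem_subt hc) hq'
    have hq'Q : q' ∈ Q := by
      simp only [hQ, Finset.mem_filter, Finset.mem_univ, true_and]
      exact ⟨subt_trans hT hqsub hq'subq, d1, d2, g1, g2, g3, g4⟩
    have hdq' := hqmax q' hq'Q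
    -- but q' is deeper than q
    have hd1 : G.dist r q < G.dist r c := by
      have := hc.2; omega
    have hd2 : G.dist r c ≤ G.dist r q' := by
      by_cases he : q' = c
      · rw [he]
      · exact le_of_lt (subt_of_ne hT hq' he)
    omega
  have hf1 := hfree c1 h1
  have hf2 := hfree c2 h2
  rcases h3.lt_or_gt with hlt | hlt
  · refine ⟨c2, Sp_subset_fixset (mem_Sp.2 ⟨h2, hf2, c1, h1, hf1, h4, hlt⟩), ?_⟩
    exact subt_trans hT hqsub (child_mem_subt h2)
  · refine ⟨c1, Sp_subset_fixset (mem_Sp.2 ⟨h1, hf1, c2, h2, hf2, h4.symm, hlt⟩), ?_⟩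
    exact subt_trans hT hqsub (child_mem_subt h1)

/-- correctness: an automorphism fixing the root and the fixing set is the identity -/
lemma fix_correct [LinearOrder V] (hT : G.IsTree) (r : V) (φ : G ≃g G) (hr : φ r = r)
    (hfix : ∀ x ∈ fixset G r, φ x = x) : ∀ v, φ v = v := by
  have hrsymm : φ.symm r = r := by
    conv_lhs => rw [← hr]
    exact φ.symm_apply_apply r
  have main : ∀ n v, G.dist r v = n → φ v = v := by
    intro n
    induction n using Nat.strong_induction_on with
    | _ n IH =>
      intro v hv
      match n, hv with
      | 0, hv =>
        have : r = v := (hT.isConnected r v).dist_eq_zero_iff.1 hv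
        rw [← this, hr]
      | (k+1), hv =>
        obtain ⟨p, hchild, hpd⟩ := exists_parent hT hv
        have hp : φ p = p := IH k (by omega) p hpd
        have hchildφ : child G r p (φ v) := child_iso hT φ hr hp hchild
        by_cases hfv : φ v = v
        · exact hfv
        exfalso
        have hvne : v ≠ φ v := fun h => hfv h.symm
        by_cases hnf : free G r v
        · -- v is free
          by_cases hvS : v ∈ fixset G r
          · exact hfv (hfix v hvS)
          have hfreeφ : free G r (φ v) := by
            by_contra hcon
            obtain ⟨x, hxS, hxsub⟩ := exists_S_vertex hT hcon
            have hxfix := hfix x hxS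
            have : φ.symm x ∈ subt G r v := by
              have := iso_mem_subt hT φ.symm hrsymm (b := φ v) hxsub
              rwa [φ.symm_apply_apply] at this
            have hsx : φ.symm x = x := by
              conv_lhs => rw [← hxfix]
              exact φ.symm_apply_apply x
            rw [hsx] at this
            exact sibling_subt_disjoint hT hchild hchildφ hvne this hxsub
          have hφvS : φ v ∉ fixset G r := by
            intro hmem
            exact hfv (φ.injective ((hfix _ hmem).trans rfl))
          have hsz : tsize G r (φ v) = tsize G r v := iso_tsize hT φ hr v
          rcases hvne.lt_or_gt with hlt | hlt
          · exact hφvS (Sp_subset_fixset (mem_Sp.2 ⟨hchildφ, hfreeφ, v, hchild, hnf,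
              hsz.symm, hlt⟩))
          · exact hvS (Sp_subset_fixset (mem_Sp.2 ⟨hchild, hnf, φ v, hchildφ, hfreeφ,
              hsz, hlt⟩))
        · -- v is not free: fixed vertex inside its subtree
          obtain ⟨x, hxS, hxsub⟩ := exists_S_vertex hT hnf
          have hxfix := hfix x hxS
          have hmem2 : x ∈ subt G r (φ v) := by
            have := iso_mem_subt hT φ hr (b := v) hxsub
            rwa [hxfix] at this
          exact sibling_subt_disjoint hT hchild hchildφ hvne hxsub hmem2
  intro v
  exact main (G.dist r v) v rfl

section counting
variable (G)

/-- active children: free children with a distinct free same-size sibling -/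
noncomputable def Act (r p : V) : Finset V :=
  univ.filter (fun b => child G r p b ∧ free G r b ∧
    ∃ b', child G r p b' ∧ free G r b' ∧ tsize G r b' = tsize G r b ∧ b' ≠ b)

/-- the resource set of a parent -/
noncomputable def Wp (r p : V) : Finset V :=
  insert p ((Act G r p).biUnion (fun b => subt G r b))

/-- weight constant -/
def csl (s : ℕ) : ℕ := if s = 1 then 3 else if s = 2 then 1 else 0

end counting

lemma mem_Act {r p b : V} : b ∈ Act G r p ↔ child G r p b ∧ free G r b ∧
    ∃ b', child G r p b' ∧ free G r b' ∧ tsize G r b' = tsize G r b ∧ b' ≠ b := by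
  simp [Act]

lemma Sp_subset_Act [LinearOrder V] (r p : V) : Sp G r p ⊆ Act G r p := by
  intro b hb
  rw [mem_Sp] at hb
  rw [mem_Act]
  obtain ⟨h1, h2, b', h3, h4, h5, h6⟩ := hb
  exact ⟨h1, h2, b', h3, h4, h5, h6.ne⟩

/-- the per-parent counting bound -/
lemma Sp_card_bound [LinearOrder V] (hT : G.IsTree) {col : V → Fin 2}
    (hcol : IsDistinguishingColoring G col) (r p : V) :
    11 * (Sp G r p).card ≤ 4 * (Wp G r p).card := by
  classical
  set cls : ℕ → Finset V := fun s => (Act G r p).filter (fun b => tsize G r b = s) with hcls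
  set szs : Finset ℕ := (Act G r p).image (tsize G r) with hszs
  -- decomposition of Sp
  have hdecomp : Sp G r p ⊆ szs.biUnion (fun s => (cls s).filter (· ∈ Sp G r p)) := by
    intro b hb
    rw [Finset.mem_biUnion]
    have hbA := Sp_subset_Act r p hb
    refine ⟨tsize G r b, Finset.mem_image_of_mem _ hbA, ?_⟩
    rw [Finset.mem_filter]
    exact ⟨Finset.mem_filter.2 ⟨hbA, rfl⟩, hb⟩
  -- per-class: each class has a member not in Sp (its minimum)
  have hclass : ∀ s ∈ szs, ((cls s).filter (· ∈ Sp G r p)).card + 1 ≤ (cls s).card := by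
    intro s hs
    obtain ⟨b0, hb0⟩ := Finset.mem_image.1 hs
    have hne : (cls s).Nonempty := ⟨b0, Finset.mem_filter.2 ⟨hb0.1, hb0.2⟩⟩
    set m := (cls s).min' hne with hm
    have hmmem : m ∈ cls s := (cls s).min'_mem hne
    have hmnotin : m ∉ Sp G r p := by
      intro hmem
      rw [mem_Sp] at hmem
      obtain ⟨h1, h2, b', h3, h4, h5, h6⟩ := hmem
      have hb'cls : b' ∈ cls s := by
        rw [hcls, Finset.mem_filter, mem_Act]
        have hm2 := Finset.mem_filter.1 hmmem
        refine ⟨⟨h3, h4, m, h1, h2, h5.symm, h6.ne'⟩, ?_⟩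
        rw [h5, hm2.2]
      exact absurd ((cls s).min'_le b' hb'cls) (not_le.2 h6)
    have hsub : (cls s).filter (· ∈ Sp G r p) ⊆ (cls s).erase m := by
      intro x hx
      rw [Finset.mem_filter] at hx
      rw [Finset.mem_erase]
      exact ⟨fun h => hmnotin (h ▸ hx.2), hx.1⟩
    have := Finset.card_le_card hsub
    rw [Finset.card_erase_of_mem hmmem] at this
    have hpos : 1 ≤ (cls s).card := Finset.card_pos.2 hne
    omega
  -- per-class inequality with weights
  have hineq : ∀ s ∈ szs, 11 * ((cls s).card - 1) ≤ 4 * ((cls s).card * s) + csl s := by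
    intro s hs
    obtain ⟨b0, hb0⟩ := Finset.mem_image.1 hs
    have hb0A := mem_Act.1 hb0.1
    have hspos : 1 ≤ s := by
      rw [← hb0.2]; exact tsize_pos r b0
    set k := (cls s).card with hk
    rcases Nat.lt_or_ge s 3 with hs3 | hs3
    · interval_cases s
      · -- s = 1 : at most 2 leaf children
        have hsub : cls 1 ⊆ univ.filter (fun b => child G r p b ∧ tsize G r b = 1) := by
          intro x hx
          rw [hcls, Finset.mem_filter, mem_Act] at hx
          rw [Finset.mem_filter]
          exact ⟨Finset.mem_univ x, hx.1.1, hx.2⟩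
        have := (Finset.card_le_card hsub).trans (leaf_children_le hT hcol r p)
        have hc1 : csl 1 = 3 := by norm_num [csl]
        omega
      · -- s = 2 : at most 4 path children
        have hsub : cls 2 ⊆ univ.filter (fun b => child G r p b ∧ tsize G r b = 2) := by
          intro x hx
          rw [hcls, Finset.mem_filter, mem_Act] at hx
          rw [Finset.mem_filter]
          exact ⟨Finset.mem_univ x, hx.1.1, hx.2⟩
        have := (Finset.card_le_card hsub).trans (path2_children_le hT hcol r p)
        have hc2 : csl 2 = 1 := by norm_num [csl]
        omega
    · -- s ≥ 3
      have hmul : k * 3 ≤ k * s := Nat.mul_le_mul_left k hs3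
      unfold csl
      have hs1 : ¬ (s = 1) := by omega
      have hs2 : ¬ (s = 2) := by omega
      rw [if_neg hs1, if_neg hs2]
      omega
  -- sum of weights at most 4
  have hw : ∑ s ∈ szs, csl s ≤ 4 := by
    have h1 : ∑ s ∈ szs, csl s = ∑ s ∈ szs.filter (fun s => s ∈ ({1, 2} : Finset ℕ)), csl s := by
      symm
      apply Finset.sum_filter_of_ne
      intro x hx hcx
      unfold csl at hcx
      by_contra hmem
      simp only [Finset.mem_insert, Finset.mem_singleton] at hmem
      push_neg at hmem
      rw [if_neg hmem.1, if_neg hmem.2] at hcx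
      exact hcx rfl
    rw [h1]
    have h2 : ∑ s ∈ szs.filter (fun s => s ∈ ({1, 2} : Finset ℕ)), csl s ≤
        ∑ s ∈ ({1, 2} : Finset ℕ), csl s := by
      apply Finset.sum_le_sum_of_subset
      intro x hx
      exact (Finset.mem_filter.1 hx).2
    refine h2.trans ?_
    decide
  -- the resource count
  have hArelcls : Act G r p = szs.biUnion cls := by
    ext b
    rw [Finset.mem_biUnion]
    constructor
    · intro hb
      exact ⟨tsize G r b, Finset.mem_image_of_mem _ hb, Finset.mem_filter.2 ⟨hb, rfl⟩⟩
    · rintro ⟨s, hs, hb⟩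
      exact (Finset.mem_filter.1 hb).1
  have hclsdisj : ∀ s ∈ szs, ∀ s' ∈ szs, s ≠ s' → Disjoint (cls s) (cls s') := by
    intro s _ s' _ hss
    rw [Finset.disjoint_left]
    intro x hx hx'
    rw [hcls, Finset.mem_filter] at hx hx'
    exact hss (hx.2 ▸ hx'.2 ▸ rfl)
  have hsum1 : ∑ b ∈ Act G r p, tsize G r b = ∑ s ∈ szs, (cls s).card * s := by
    rw [hArelcls, Finset.sum_biUnion hclsdisj]
    refine Finset.sum_congr rfl fun s hs => ?_
    rw [Finset.sum_congr rfl (fun b hb => (Finset.mem_filter.1 hb).2),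
      Finset.sum_const, smul_eq_mul]
  have hsibdisj : ∀ b ∈ Act G r p, ∀ b' ∈ Act G r p, b ≠ b' →
      Disjoint (subt G r b) (subt G r b') := by
    intro b hb b' hb' hne
    rw [Finset.disjoint_left]
    intro x hx hx'
    exact sibling_subt_disjoint hT (mem_Act.1 hb).1 (mem_Act.1 hb').1 hne hx hx'
  have hsum2 : ((Act G r p).biUnion (fun b => subt G r b)).card = ∑ b ∈ Act G r p, tsize G r b :=
    Finset.card_biUnion hsibdisj
  have hpnot : p ∉ (Act G r p).biUnion (fun b => subt G r b) := by
    rw [Finset.mem_biUnion]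
    rintro ⟨b, hb, hmem⟩
    have hchild := (mem_Act.1 hb).1
    have hne : p ≠ b := hchild.1.ne
    have := subt_of_ne hT hmem hne
    have := hchild.2
    omega
  have hWcard : (Wp G r p).card = ∑ b ∈ Act G r p, tsize G r b + 1 := by
    unfold Wp
    rw [Finset.card_insert_of_notMem hpnot, hsum2]
  -- put everything together
  have hSp : (Sp G r p).card ≤ ∑ s ∈ szs, ((cls s).card - 1) := by
    calc (Sp G r p).card ≤ (szs.biUnion (fun s => (cls s).filter (· ∈ Sp G r p))).card :=
          Finset.card_le_card hdecomp
      _ ≤ ∑ s ∈ szs, ((cls s).filter (· ∈ Sp G r p)).card := Finset.card_biUnion_le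
      _ ≤ ∑ s ∈ szs, ((cls s).card - 1) := by
          refine Finset.sum_le_sum fun s hs => ?_
          have := hclass s hs
          omega
  calc 11 * (Sp G r p).card ≤ ∑ s ∈ szs, 11 * ((cls s).card - 1) := by
        rw [← Finset.mul_sum]; exact Nat.mul_le_mul_left 11 hSp
    _ ≤ ∑ s ∈ szs, (4 * ((cls s).card * s) + csl s) := Finset.sum_le_sum hineq
    _ = 4 * (∑ s ∈ szs, (cls s).card * s) + ∑ s ∈ szs, csl s := by
        rw [Finset.sum_add_distrib, Finset.mul_sum]
    _ ≤ 4 * (∑ b ∈ Act G r p, tsize G r b) + 4 := by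
        rw [hsum1]; omega
    _ = 4 * (Wp G r p).card := by rw [hWcard]; ring

/-- the global counting bound -/
lemma fixset_card_bound [LinearOrder V] (hT : G.IsTree) {col : V → Fin 2}
    (hcol : IsDistinguishingColoring G col) (r : V) :
    11 * (fixset G r).card ≤ 4 * Fintype.card V := by
  classical
  set P : Finset V := univ.filter (fun p => (Sp G r p).Nonempty) with hP
  have hSpdisj : ∀ p ∈ (univ : Finset V), ∀ p' ∈ (univ : Finset V), p ≠ p' →
      Disjoint (Sp G r p) (Sp G r p') := by
    intro p _ p' _ hne
    rw [Finset.disjoint_left]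
    intro b hb hb'
    exact hne (parent_unique hT (mem_Sp.1 hb).1 (mem_Sp.1 hb').1)
  have h1 : (fixset G r).card = ∑ p, (Sp G r p).card := Finset.card_biUnion hSpdisj
  have h2 : ∑ p ∈ P, (Sp G r p).card = ∑ p, (Sp G r p).card := by
    apply Finset.sum_filter_of_ne
    intro p _ hcard
    exact Finset.card_pos.1 (Nat.pos_of_ne_zero hcard)
  have hkey : ∀ p' ∈ P, ∀ b : V, free G r b → p' ∈ subt G r b → False := by
    intro p' hp' b hfb hmem
    rw [hP, Finset.mem_filter] at hp'
    obtain ⟨b0, hb0⟩ := hp'.2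
    rw [mem_Sp] at hb0
    obtain ⟨g1, g2, b', g3, g4, g5, g6⟩ := hb0
    exact hfb p' hmem b' b0 g3 g1 g6.ne g5
  have hWdisj : ∀ p ∈ P, ∀ p' ∈ P, p ≠ p' → Disjoint (Wp G r p) (Wp G r p') := by
    intro p hp p' hp' hne
    rw [Finset.disjoint_left]
    intro x hx hx'
    unfold Wp at hx hx'
    rw [Finset.mem_insert, Finset.mem_biUnion] at hx hx'
    rcases hx with rfl | ⟨b, hb, hmem⟩
    · rcases hx' with h | ⟨b', hb', hmem'⟩
      · exact hne h
      · exact hkey x hp b' (mem_Act.1 hb').2.1 hmem'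
    · rcases hx' with rfl | ⟨b', hb', hmem'⟩
      · exact hkey x hp' b (mem_Act.1 hb).2.1 hmem
      · -- two subtrees overlapping
        have hfb := (mem_Act.1 hb).2.1
        have hfb' := (mem_Act.1 hb').2.1
        have hcb := (mem_Act.1 hb).1
        have hcb' := (mem_Act.1 hb').1
        rcases le_total (G.dist r b) (G.dist r b') with hle | hle
        · have hbb' : b' ∈ subt G r b := subt_comparable hT hmem hmem' hle
          by_cases he : b' = b
          · exact hne (parent_unique hT hcb (he ▸ hcb'))
          · exact hkey p' hp' b hfb (parent_mem_subt hT hbb' he hcb')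
        · have hbb' : b ∈ subt G r b' := subt_comparable hT hmem' hmem hle
          by_cases he : b = b'
          · exact hne (parent_unique hT hcb (he ▸ hcb'))
          · exact hkey p hp b' hfb' (parent_mem_subt hT hbb' he hcb)
  calc 11 * (fixset G r).card = ∑ p ∈ P, 11 * (Sp G r p).card := by
        rw [h1, ← h2, Finset.mul_sum]
    _ ≤ ∑ p ∈ P, 4 * (Wp G r p).card :=
        Finset.sum_le_sum fun p _ => Sp_card_bound hT hcol r p
    _ = 4 * ∑ p ∈ P, (Wp G r p).card := by rw [Finset.mul_sum]
    _ = 4 * (P.biUnion (fun p => Wp G r p)).card := by rw [Finset.card_biUnion hWdisj]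
    _ ≤ 4 * Fintype.card V := by
        have := Finset.card_le_card (Finset.subset_univ (P.biUnion (fun p => Wp G r p)))
        rw [Finset.card_univ] at this
        omega

end TreeFix


theorem tree_fixing_density_le
    {V : Type*} [Fintype V] (G : SimpleGraph V)
    (hT : G.IsTree) (hn : 3 ≤ Fintype.card V)
    (h2 : Distinguishable G 2) :
    (fixingNumber G : ℚ) ≤ 4 * Fintype.card V / 11 := by
  classical
  letI : LinearOrder V := LinearOrder.lift' (Fintype.equivFin V) (Fintype.equivFin V).injective
  obtain ⟨col, hcol⟩ := h2
  obtain ⟨r, r', hrr', hcenter⟩ := TreeFix.exists_center hT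
  set S : Finset V := if (TreeFix.fixset G r).Nonempty then TreeFix.fixset G r else {r'} with hS
  have hSfix : IsFixingSet G ↑S := by
    intro φ hφ
    have hSne : S.Nonempty := by
      rw [hS]
      split
      · assumption
      · exact ⟨r', Finset.mem_singleton_self r'⟩
    have hrfix : φ r = r := by
      rcases hcenter φ with ⟨h1, _⟩ | ⟨h1, h2'⟩
      · exact h1
      rcases hrr' with heq | hadj
      · rw [h1, heq]
      · exfalso
        obtain ⟨x, hx⟩ := hSne
        have hfx : φ x = x := hφ x (Finset.mem_coe.2 hx)
        have hd := TreeFix.iso_dist hT.isConnected φ x r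
        rw [hfx, h1] at hd
        exact TreeFix.dist_ne_of_adj hT hadj x hd.symm
    intro v
    apply TreeFix.fix_correct hT r φ hrfix _ v
    intro x hxmem
    apply hφ
    rw [hS]
    by_cases hne : (TreeFix.fixset G r).Nonempty
    · rw [if_pos hne]; exact Finset.mem_coe.2 hxmem
    · exact absurd hxmem (by simp [Finset.not_nonempty_iff_eq_empty.1 hne])
  have hcard : 11 * S.card ≤ 4 * Fintype.card V := by
    rw [hS]
    split_ifs with hne
    · exact TreeFix.fixset_card_bound hT hcol r
    · rw [Finset.card_singleton]; omega
  have hmem : fixingNumber G ≤ S.card := Nat.sInf_le ⟨S, rfl, hSfix⟩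
  have hq1 : (fixingNumber G : ℚ) ≤ (S.card : ℚ) := by exact_mod_cast hmem
  have hq2 : (11 : ℚ) * S.card ≤ 4 * Fintype.card V := by exact_mod_cast hcard
  have hq3 : (S.card : ℚ) ≤ 4 * Fintype.card V / 11 := by linarith
  linarith
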